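/- If a graph G satisfies ex(G) ≥ s+1, then G contains a subgraph H that is leafless (no vertices of degree 1), has excess exactly s+1, and in which every connected component has cyclomatic number at least 2. -/

import Mathlib

namespace CuckooStash

variable {V E : Type*} [Fintype V] [DecidableEq V] [Fintype E] [DecidableEq E]

/-- Adjacency relation induced by the edges in `F` of a multigraph with endpoint map `ends`. -/
def adjOn (ends : E → V × V) (F : Finset E) (u v : V) : Prop :=
  ∃ e ∈ F, ends e = (u, v) ∨ ends e = (v, u)

/-- The setoid whose classes are the connected components (isolated vertices form
    their own components). -/
def compSetoid (ends : E → V × V) (F : Finset E) : Setoid V :=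
  Relation.EqvGen.setoid (adjOn ends F)

/-- The number of connected components (isolated vertices count as components). -/
noncomputable def zeta (ends : E → V × V) (F : Finset E) : ℕ :=
  Nat.card (Quotient (compSetoid ends F))

/-- The cyclomatic number `γ = m - n + ζ`. -/
noncomputable def gamma (ends : E → V × V) (F : Finset E) : ℕ :=
  F.card + zeta ends F - Fintype.card V

open Classical in
/-- The degree of a vertex (a self-loop counts twice). -/
noncomputable def deg (ends : E → V × V) (F : Finset E) (v : V) : ℕ :=
  (F.filter (fun e => (ends e).1 = v)).card + (F.filter (fun e => (ends e).2 = v)).card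

open Classical in
/-- The vertex set of the connected component of `v`. -/
noncomputable def compVerts (ends : E → V × V) (F : Finset E) (v : V) : Finset V :=
  Finset.univ.filter (fun u => Relation.EqvGen (adjOn ends F) v u)

open Classical in
/-- The edge set of the connected component of `v`. -/
noncomputable def compEdges (ends : E → V × V) (F : Finset E) (v : V) : Finset E :=
  F.filter (fun e => Relation.EqvGen (adjOn ends F) v (ends e).1)

/-- Every connected component is acyclic or unicyclic. -/
def GoodComponents (ends : E → V × V) (F : Finset E) : Prop :=
  ∀ v, (compEdges ends F v).card ≤ (compVerts ends F v).card

/-- The excess: the minimum number of edges one has to remove from `F` so that all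
    connected components of the remaining graph are acyclic or unicyclic. -/
noncomputable def excess (ends : E → V × V) (F : Finset E) : ℕ :=
  sInf {d : ℕ | ∃ F' ⊆ F, F'.card + d = F.card ∧ GoodComponents ends F'}

/-- The number of connected components that contain a cycle. -/
noncomputable def zetaCyc (ends : E → V × V) (F : Finset E) : ℕ :=
  Nat.card {c : Quotient (compSetoid ends F) //
    ∃ v, Quotient.mk (compSetoid ends F) v = c ∧
      (compVerts ends F v).card ≤ (compEdges ends F v).card}

/-- A graph is acyclic iff every edge is a bridge. -/
def Acyclic (ends : E → V × V) (F : Finset E) : Prop :=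
  ∀ e ∈ F, zeta ends (F.erase e) = zeta ends F + 1

/-- `e` is a cycle edge of `F`: removing it does not disconnect anything. -/
def CycleEdge (ends : E → V × V) (F : Finset E) (e : E) : Prop :=
  e ∈ F ∧ zeta ends (F.erase e) = zeta ends F

end CuckooStash

namespace CuckooStash
variable {V E : Type*} [Fintype V] [DecidableEq V] [Fintype E] [DecidableEq E]
variable (ends : E → V × V)

omit [Fintype V] [DecidableEq V] [Fintype E] [DecidableEq E] in
lemma eqvGen_mono {F G : Finset E} (hFG : F ⊆ G) {p q : V}
    (h : Relation.EqvGen (adjOn ends F) p q) : Relation.EqvGen (adjOn ends G) p q :=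
  Relation.EqvGen.mono (r := adjOn ends F) (p := adjOn ends G) (fun a b ⟨e, he, hx⟩ => ⟨e, hFG he, hx⟩) p q h

omit [Fintype V] [DecidableEq V] [Fintype E] [DecidableEq E] in
lemma eqvGen_invariant {F : Finset E} {T : V → Prop}
    (hT : ∀ p q, adjOn ends F p q → (T p ↔ T q)) {p q : V}
    (h : Relation.EqvGen (adjOn ends F) p q) : T p ↔ T q := by
  induction h with
  | rel a b hab => exact hT a b hab
  | refl a => exact Iff.rfl
  | symm a b _ ih => exact ih.symm
  | trans a b c _ _ ih1 ih2 => exact ih1.trans ih2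

omit [Fintype V] [Fintype E] [DecidableEq E] in
lemma eqvGen_locality {F : Finset E} {S : Finset V}
    (hS : ∀ e ∈ F, ((ends e).1 ∈ S ↔ (ends e).2 ∈ S)) {p q : V}
    (h : Relation.EqvGen (adjOn ends F) p q) :
    (p ∈ S → q ∈ S ∧ Relation.EqvGen (adjOn ends (F.filter (fun e => (ends e).1 ∈ S))) p q) ∧
    (q ∈ S → p ∈ S ∧ Relation.EqvGen (adjOn ends (F.filter (fun e => (ends e).1 ∈ S))) p q) := by
  induction h with
  | rel a b hab =>
      obtain ⟨e, he, hx⟩ := hab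
      have hiff : a ∈ S ↔ b ∈ S := by
        rcases hx with h1 | h1
        · have := hS e he; rw [h1] at this; exact this
        · have := hS e he; rw [h1] at this; exact this.symm
      have hkey : a ∈ S → e ∈ F.filter (fun e => (ends e).1 ∈ S) := by
        intro ha
        refine Finset.mem_filter.2 ⟨he, ?_⟩
        rcases hx with h1 | h1 <;> rw [h1]
        · exact ha
        · exact hiff.mp ha
      constructor
      · intro ha
        exact ⟨hiff.mp ha, Relation.EqvGen.rel _ _ ⟨e, hkey ha, hx⟩⟩
      · intro hb
        exact ⟨hiff.mpr hb, Relation.EqvGen.rel _ _ ⟨e, hkey (hiff.mpr hb), hx⟩⟩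
  | refl a => exact ⟨fun ha => ⟨ha, Relation.EqvGen.refl a⟩, fun ha => ⟨ha, Relation.EqvGen.refl a⟩⟩
  | symm a b _ ih =>
      exact ⟨fun hb => ⟨(ih.2 hb).1, ((ih.2 hb).2).symm _ _⟩,
             fun ha => ⟨(ih.1 ha).1, ((ih.1 ha).2).symm _ _⟩⟩
  | trans a b c _ _ ih1 ih2 =>
      constructor
      · intro ha
        obtain ⟨hb, h1⟩ := ih1.1 ha
        obtain ⟨hc, h2⟩ := ih2.1 hb
        exact ⟨hc, h1.trans _ _ _ h2⟩
      · intro hc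
        obtain ⟨hb, h2⟩ := ih2.2 hc
        obtain ⟨ha, h1⟩ := ih1.2 hb
        exact ⟨ha, h1.trans _ _ _ h2⟩

omit [DecidableEq V] [Fintype E] [DecidableEq E] in
lemma mem_compVerts {F : Finset E} {v u : V} :
    u ∈ compVerts ends F v ↔ Relation.EqvGen (adjOn ends F) v u := by
  simp [compVerts]

omit [DecidableEq V] [DecidableEq E] in
lemma mem_compEdges {F : Finset E} {v : V} {e : E} :
    e ∈ compEdges ends F v ↔ e ∈ F ∧ Relation.EqvGen (adjOn ends F) v (ends e).1 := by
  simp [compEdges]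

omit [Fintype V] [DecidableEq V] [Fintype E] [DecidableEq E] in
lemma eqvGen_ends {F : Finset E} {e : E} (he : e ∈ F) :
    Relation.EqvGen (adjOn ends F) (ends e).1 (ends e).2 :=
  Relation.EqvGen.rel _ _ ⟨e, he, Or.inl rfl⟩

omit [DecidableEq V] [Fintype E] [DecidableEq E] in
/-- A component's vertex set is closed under edges. -/
lemma compVerts_closed {F : Finset E} {v : V} :
    ∀ e ∈ F, ((ends e).1 ∈ compVerts ends F v ↔ (ends e).2 ∈ compVerts ends F v) := by
  intro e he
  simp only [mem_compVerts]
  constructor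
  · intro h; exact h.trans _ _ _ (eqvGen_ends ends he)
  · intro h; exact h.trans _ _ _ ((eqvGen_ends ends he).symm _ _)

omit [DecidableEq E] in
lemma filter_mem_compVerts {F : Finset E} (v : V) :
    F.filter (fun e => (ends e).1 ∈ compVerts ends F v) = compEdges ends F v := by
  ext e
  simp [mem_compEdges, mem_compVerts, Finset.mem_filter]

/-- Adding back a whole good component preserves goodness. -/
lemma good_union_comp {F F'' : Finset E} {v : V}
    (hsub : F'' ⊆ F \ compEdges ends F v)
    (hgoodc : (compEdges ends F v).card ≤ (compVerts ends F v).card)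
    (hg : GoodComponents ends F'') :
    GoodComponents ends (F'' ∪ compEdges ends F v) := by
  classical
  set S := compVerts ends F v with hSdef
  set C := compEdges ends F v with hCdef
  set Fn := F'' ∪ C with hFndef
  have hCF : C ⊆ F := Finset.filter_subset _ _
  have hFnF : Fn ⊆ F := Finset.union_subset (hsub.trans (Finset.sdiff_subset)) hCF
  have hSF : ∀ e ∈ F, ((ends e).1 ∈ S ↔ (ends e).2 ∈ S) := compVerts_closed ends
  have hSFn : ∀ e ∈ Fn, ((ends e).1 ∈ S ↔ (ends e).2 ∈ S) := fun e he => hSF e (hFnF he)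
  have hSF'' : ∀ e ∈ F'', ((ends e).1 ∈ S ↔ (ends e).2 ∈ S) :=
    fun e he => hSF e ((hsub.trans Finset.sdiff_subset) he)
  -- edges of F'' avoid S entirely
  have hF''S : ∀ e ∈ F'', (ends e).1 ∉ S := by
    intro e he h1
    have heF : e ∈ F := (hsub.trans Finset.sdiff_subset) he
    have : e ∈ C := by
      rw [hCdef, mem_compEdges]
      exact ⟨heF, (mem_compVerts ends).1 h1⟩
    exact ((Finset.mem_sdiff.1 (hsub he)).2) this
  have hFfilter : F.filter (fun e => (ends e).1 ∈ S) = C := filter_mem_compVerts ends v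
  have hCmemS : ∀ e ∈ C, (ends e).1 ∈ S := by
    intro e he
    rw [mem_compVerts]
    exact ((mem_compEdges ends).1 he).2
  have hFnfilter : Fn.filter (fun e => (ends e).1 ∈ S) = C := by
    ext e
    simp only [Finset.mem_filter, hFndef, Finset.mem_union]
    constructor
    · rintro ⟨he | he, h1⟩
      · exact absurd h1 (hF''S e he)
      · exact he
    · intro he; exact ⟨Or.inr he, hCmemS e he⟩
  have hSc : ∀ e ∈ Fn, ((ends e).1 ∈ Sᶜ ↔ (ends e).2 ∈ Sᶜ) := by
    intro e he
    simp only [Finset.mem_compl]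
    exact not_iff_not.2 (hSFn e he)
  have hFnfilterc : Fn.filter (fun e => (ends e).1 ∈ Sᶜ) = F'' := by
    ext e
    simp only [Finset.mem_filter, hFndef, Finset.mem_union, Finset.mem_compl]
    constructor
    · rintro ⟨he | he, h1⟩
      · exact he
      · exact absurd (hCmemS e he) h1
    · intro he; exact ⟨Or.inl he, hF''S e he⟩
  intro w
  by_cases hw : w ∈ S
  · -- w's component in Fn is exactly v's component in F
    have hvw : Relation.EqvGen (adjOn ends F) v w := (mem_compVerts ends).1 hw
    have hverts : compVerts ends Fn w = S := by
      ext x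
      rw [mem_compVerts, hSdef, mem_compVerts]
      constructor
      · intro hx
        have := ((eqvGen_locality ends hSFn hx).1 hw).1
        exact (mem_compVerts ends).1 this
      · intro hx
        have hwx : Relation.EqvGen (adjOn ends F) w x := (hvw.symm _ _).trans _ _ _ hx
        have := ((eqvGen_locality ends hSF hwx).1 hw).2
        rw [hFfilter] at this
        exact eqvGen_mono ends Finset.subset_union_right this
    have hedges : compEdges ends Fn w = C := by
      ext e
      rw [mem_compEdges]
      constructor
      · rintro ⟨he, hr⟩
        have h1 : (ends e).1 ∈ S := ((eqvGen_locality ends hSFn hr).1 hw).1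
        rw [← hFnfilter]
        exact Finset.mem_filter.2 ⟨he, h1⟩
      · intro he
        refine ⟨Finset.mem_union_right _ he, ?_⟩
        have h1 : (ends e).1 ∈ S := hCmemS e he
        have hwx : Relation.EqvGen (adjOn ends F) w (ends e).1 :=
          (hvw.symm _ _).trans _ _ _ ((mem_compVerts ends).1 h1)
        have := ((eqvGen_locality ends hSF hwx).1 hw).2
        rw [hFfilter] at this
        exact eqvGen_mono ends Finset.subset_union_right this
    rw [hverts, hedges]
    exact hgoodc
  · -- w's component in Fn equals its component in F''
    have hwc : w ∈ Sᶜ := Finset.mem_compl.2 hw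
    have hloc : ∀ x, Relation.EqvGen (adjOn ends Fn) w x ↔ Relation.EqvGen (adjOn ends F'') w x := by
      intro x
      constructor
      · intro hx
        have := ((eqvGen_locality ends hSc hx).1 hwc).2
        rw [hFnfilterc] at this
        exact this
      · exact eqvGen_mono ends Finset.subset_union_left
    have hverts : compVerts ends Fn w = compVerts ends F'' w := by
      ext x; rw [mem_compVerts, mem_compVerts, hloc]
    have hedges : compEdges ends Fn w = compEdges ends F'' w := by
      ext e
      rw [mem_compEdges, mem_compEdges]
      constructor
      · rintro ⟨he, hr⟩
        have h1 : (ends e).1 ∈ Sᶜ := ((eqvGen_locality ends hSc hr).1 hwc).1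
        have heF'' : e ∈ F'' := by
          rw [← hFnfilterc]; exact Finset.mem_filter.2 ⟨he, h1⟩
        exact ⟨heF'', (hloc _).1 hr⟩
      · rintro ⟨he, hr⟩
        exact ⟨Finset.mem_union_left _ he, (hloc _).2 hr⟩
    rw [hverts, hedges]
    exact hg w

/-- Adding a pendant edge at an otherwise-isolated vertex preserves goodness. -/
lemma good_insert_pendant {F'' : Finset E} {e : E} {u v : V}
    (hu : u ≠ v)
    (hends : ends e = (v, u) ∨ ends e = (u, v))
    (hnotv : ∀ e' ∈ F'', (ends e').1 ≠ v ∧ (ends e').2 ≠ v)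
    (he'' : e ∉ F'')
    (hg : GoodComponents ends F'') :
    GoodComponents ends (insert e F'') := by
  classical
  set Fn := insert e F'' with hFndef
  set S : Finset V := insert v (compVerts ends F'' u) with hSdef
  have huS : u ∈ S := by
    rw [hSdef, Finset.mem_insert, mem_compVerts]
    exact Or.inr (Relation.EqvGen.refl u)
  have hvS : v ∈ S := Finset.mem_insert_self _ _
  have hadjvu : adjOn ends Fn v u := ⟨e, Finset.mem_insert_self _ _, hends⟩
  have hvnot : ∀ x, Relation.EqvGen (adjOn ends F'') v x → x = v := by
    intro x hx
    have key : ∀ p q, adjOn ends F'' p q → ((p = v) ↔ (q = v)) := by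
      rintro p q ⟨e', he', hx'⟩
      have h1 := (hnotv e' he').1
      have h2 := (hnotv e' he').2
      rcases hx' with h3 | h3 <;> rw [h3] at h1 h2
      · exact iff_of_false h1 h2
      · exact iff_of_false h2 h1
    exact (eqvGen_invariant ends key hx).1 rfl
  have hvnotu : v ∉ compVerts ends F'' u := by
    intro hmem
    have : Relation.EqvGen (adjOn ends F'') v u :=
      ((mem_compVerts ends).1 hmem).symm _ _
    exact hu (hvnot u this)
  have h1e : (ends e).1 ∈ S := by
    rcases hends with h3 | h3 <;> rw [h3]
    · exact hvS
    · exact huS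
  have hSFn : ∀ e' ∈ Fn, ((ends e').1 ∈ S ↔ (ends e').2 ∈ S) := by
    intro e' he'
    rcases Finset.mem_insert.1 he' with rfl | he'
    · rcases hends with h3 | h3 <;> rw [h3]
      · exact iff_of_true hvS huS
      · exact iff_of_true huS hvS
    · have h1 := (hnotv e' he').1
      have h2 := (hnotv e' he').2
      rw [hSdef, Finset.mem_insert, Finset.mem_insert]
      rw [or_iff_right h1, or_iff_right h2]
      exact compVerts_closed ends e' he'
  have hchar : ∀ x, Relation.EqvGen (adjOn ends Fn) v x ↔ x ∈ S := by
    intro x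
    constructor
    · intro hx
      exact ((eqvGen_locality ends hSFn hx).1 hvS).1
    · intro hx
      rcases Finset.mem_insert.1 hx with rfl | hx
      · exact Relation.EqvGen.refl x
      · have h1 : Relation.EqvGen (adjOn ends F'') u x := (mem_compVerts ends).1 hx
        exact (Relation.EqvGen.rel _ _ hadjvu).trans _ _ _
          (eqvGen_mono ends (Finset.subset_insert e F'') h1)
  intro w
  by_cases hw : w ∈ S
  · have hvw : Relation.EqvGen (adjOn ends Fn) v w := (hchar w).2 hw
    have hverts : compVerts ends Fn w = S := by
      ext x
      rw [mem_compVerts, ← hchar]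
      constructor
      · intro hx; exact hvw.trans _ _ _ hx
      · intro hx; exact (hvw.symm _ _).trans _ _ _ hx
    have hedges : compEdges ends Fn w = insert e (compEdges ends F'' u) := by
      ext e'
      rw [mem_compEdges]
      constructor
      · rintro ⟨he', hr⟩
        rcases Finset.mem_insert.1 he' with rfl | he'
        · exact Finset.mem_insert_self _ _
        · refine Finset.mem_insert_of_mem ?_
          have h1S : (ends e').1 ∈ S := (hchar _).1 (hvw.trans _ _ _ hr)
          have h1 : (ends e').1 ∈ compVerts ends F'' u := by
            rcases Finset.mem_insert.1 h1S with h3 | h3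
            · exact absurd h3 (hnotv e' he').1
            · exact h3
          exact (mem_compEdges ends).2 ⟨he', (mem_compVerts ends).1 h1⟩
      · intro hmem
        rcases Finset.mem_insert.1 hmem with rfl | he'
        · refine ⟨Finset.mem_insert_self _ _, ?_⟩
          exact (hvw.symm _ _).trans _ _ _ ((hchar _).2 h1e)
        · obtain ⟨heF, hr⟩ := (mem_compEdges ends).1 he'
          refine ⟨Finset.mem_insert_of_mem heF, ?_⟩
          have : Relation.EqvGen (adjOn ends Fn) v (ends e').1 :=
            (Relation.EqvGen.rel _ _ hadjvu).trans _ _ _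
              (eqvGen_mono ends (Finset.subset_insert e F'') hr)
          exact (hvw.symm _ _).trans _ _ _ this
    rw [hverts, hedges, hSdef]
    have hecard : e ∉ compEdges ends F'' u := fun hmem =>
      he'' ((mem_compEdges ends).1 hmem).1
    rw [Finset.card_insert_of_notMem hecard, Finset.card_insert_of_notMem hvnotu]
    exact Nat.add_le_add_right (hg u) 1
  · have hwc : w ∈ Sᶜ := Finset.mem_compl.2 hw
    have hSc : ∀ e' ∈ Fn, ((ends e').1 ∈ Sᶜ ↔ (ends e').2 ∈ Sᶜ) := by
      intro e' he'
      simp only [Finset.mem_compl]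
      exact not_iff_not.2 (hSFn e' he')
    have hfilter : Fn.filter (fun e' => (ends e').1 ∈ Sᶜ) ⊆ F'' := by
      intro e' he'
      obtain ⟨h1, h2⟩ := Finset.mem_filter.1 he'
      rcases Finset.mem_insert.1 h1 with rfl | h1
      · exact absurd h1e (Finset.mem_compl.1 h2)
      · exact h1
    have hloc : ∀ x, Relation.EqvGen (adjOn ends Fn) w x ↔
        Relation.EqvGen (adjOn ends F'') w x := by
      intro x
      constructor
      · intro hx
        exact eqvGen_mono ends hfilter ((eqvGen_locality ends hSc hx).1 hwc).2
      · exact eqvGen_mono ends (Finset.subset_insert e F'')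
    have hverts : compVerts ends Fn w = compVerts ends F'' w := by
      ext x; rw [mem_compVerts, mem_compVerts, hloc]
    have hedges : compEdges ends Fn w = compEdges ends F'' w := by
      ext e'
      rw [mem_compEdges, mem_compEdges]
      constructor
      · rintro ⟨he', hr⟩
        have h1 : (ends e').1 ∈ Sᶜ := ((eqvGen_locality ends hSc hr).1 hwc).1
        have heF'' : e' ∈ F'' := by
          rcases Finset.mem_insert.1 he' with rfl | h2
          · exact absurd h1e (Finset.mem_compl.1 h1)
          · exact h2
        exact ⟨heF'', (hloc _).1 hr⟩
      · rintro ⟨he', hr⟩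
        exact ⟨Finset.mem_insert_of_mem he', (hloc _).2 hr⟩
    rw [hverts, hedges]
    exact hg w

omit [DecidableEq V] [DecidableEq E] in
lemma good_empty : GoodComponents ends (∅ : Finset E) := by
  intro v
  have : compEdges ends (∅ : Finset E) v = ∅ := by
    simp [compEdges]
  simp [this]

lemma excess_le {F F' : Finset E} {d : ℕ} (h1 : F' ⊆ F) (h2 : F'.card + d = F.card)
    (h3 : GoodComponents ends F') : excess ends F ≤ d :=
  Nat.sInf_le ⟨F', h1, h2, h3⟩

lemma excess_mem (F : Finset E) :
    ∃ F' ⊆ F, F'.card + excess ends F = F.card ∧ GoodComponents ends F' :=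
  Nat.sInf_mem (⟨F.card, ∅, Finset.empty_subset F, by simp, good_empty ends⟩ :
    {d : ℕ | ∃ F' ⊆ F, F'.card + d = F.card ∧ GoodComponents ends F'}.Nonempty)

lemma excess_empty : excess ends (∅ : Finset E) = 0 :=
  Nat.le_zero.1 (excess_le ends (Finset.Subset.refl _) (by simp) (good_empty ends))

lemma excess_le_erase_add_one {F : Finset E} {e : E} (he : e ∈ F) :
    excess ends F ≤ excess ends (F.erase e) + 1 := by
  obtain ⟨F'', h1, h2, h3⟩ := excess_mem ends (F.erase e)
  have hcard : (F.erase e).card = F.card - 1 := Finset.card_erase_of_mem he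
  have hpos : 1 ≤ F.card := Finset.card_pos.2 ⟨e, he⟩
  exact excess_le ends (h1.trans (Finset.erase_subset e F)) (by omega) h3

lemma excess_le_erase_pendant {F : Finset E} {e : E} {u v : V}
    (he : e ∈ F) (hu : u ≠ v)
    (hends : ends e = (v, u) ∨ ends e = (u, v))
    (honly : ∀ e' ∈ F, e' ≠ e → (ends e').1 ≠ v ∧ (ends e').2 ≠ v) :
    excess ends F ≤ excess ends (F.erase e) := by
  obtain ⟨F'', h1, h2, h3⟩ := excess_mem ends (F.erase e)
  have he'' : e ∉ F'' := fun hmem => (Finset.mem_erase.1 (h1 hmem)).1 rfl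
  have hnotv : ∀ e' ∈ F'', (ends e').1 ≠ v ∧ (ends e').2 ≠ v := by
    intro e' he'
    have := Finset.mem_erase.1 (h1 he')
    exact honly e' this.2 this.1
  have hgood : GoodComponents ends (insert e F'') :=
    good_insert_pendant ends hu hends hnotv he'' h3
  have hsub : insert e F'' ⊆ F :=
    Finset.insert_subset he (h1.trans (Finset.erase_subset e F))
  have hcard : (F.erase e).card = F.card - 1 := Finset.card_erase_of_mem he
  have hpos : 1 ≤ F.card := Finset.card_pos.2 ⟨e, he⟩
  refine excess_le ends hsub ?_ hgood
  rw [Finset.card_insert_of_notMem he'']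
  omega

lemma excess_le_sdiff_comp {F : Finset E} {v : V}
    (hgoodc : (compEdges ends F v).card ≤ (compVerts ends F v).card) :
    excess ends F ≤ excess ends (F \ compEdges ends F v) := by
  obtain ⟨F'', h1, h2, h3⟩ := excess_mem ends (F \ compEdges ends F v)
  have hgood : GoodComponents ends (F'' ∪ compEdges ends F v) :=
    good_union_comp ends h1 hgoodc h3
  have hCF : compEdges ends F v ⊆ F := fun e he => ((mem_compEdges ends).1 he).1
  have hdisj : Disjoint F'' (compEdges ends F v) :=
    Finset.disjoint_left.2 fun e heF'' heC => (Finset.mem_sdiff.1 (h1 heF'')).2 heC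
  have hsub : F'' ∪ compEdges ends F v ⊆ F :=
    Finset.union_subset (h1.trans Finset.sdiff_subset) hCF
  have hc1 : (F \ compEdges ends F v).card = F.card - (compEdges ends F v).card :=
    Finset.card_sdiff_of_subset hCF
  have hc2 : (compEdges ends F v).card ≤ F.card := Finset.card_le_card hCF
  refine excess_le ends hsub ?_ hgood
  rw [Finset.card_union_of_disjoint hdisj]
  omega

lemma deg_one_pendant {F : Finset E} {v : V} (hdeg : deg ends F v = 1) :
    ∃ e ∈ F, ∃ u, u ≠ v ∧ (ends e = (v, u) ∨ ends e = (u, v)) ∧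
      ∀ e' ∈ F, e' ≠ e → (ends e').1 ≠ v ∧ (ends e').2 ≠ v := by
  classical
  unfold deg at hdeg
  rcases (by omega :
      (F.filter (fun e => (ends e).1 = v)).card = 0 ∧
        (F.filter (fun e => (ends e).2 = v)).card = 1 ∨
      (F.filter (fun e => (ends e).1 = v)).card = 1 ∧
        (F.filter (fun e => (ends e).2 = v)).card = 0) with ⟨hA, hB⟩ | ⟨hA, hB⟩
  · have hA' := Finset.eq_empty_iff_forall_notMem.1 (Finset.card_eq_zero.1 hA)
    obtain ⟨e, hBe⟩ := Finset.card_eq_one.1 hB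
    have heB : e ∈ ({e} : Finset E) := Finset.mem_singleton_self e
    rw [← hBe] at heB
    obtain ⟨heF, h2v⟩ := Finset.mem_filter.1 heB
    have h1v : (ends e).1 ≠ v := fun hv => hA' e (Finset.mem_filter.2 ⟨heF, hv⟩)
    refine ⟨e, heF, (ends e).1, h1v, Or.inr ?_, ?_⟩
    · rw [← h2v]
    · intro e' he' hne
      constructor
      · intro hv; exact hA' e' (Finset.mem_filter.2 ⟨he', hv⟩)
      · intro hv
        have h5 : e' ∈ ({e} : Finset E) := by
          rw [← hBe]; exact Finset.mem_filter.2 ⟨he', hv⟩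
        exact hne (Finset.mem_singleton.1 h5)
  · have hB' := Finset.eq_empty_iff_forall_notMem.1 (Finset.card_eq_zero.1 hB)
    obtain ⟨e, hAe⟩ := Finset.card_eq_one.1 hA
    have heA : e ∈ ({e} : Finset E) := Finset.mem_singleton_self e
    rw [← hAe] at heA
    obtain ⟨heF, h1v⟩ := Finset.mem_filter.1 heA
    have h2v : (ends e).2 ≠ v := fun hv => hB' e (Finset.mem_filter.2 ⟨heF, hv⟩)
    refine ⟨e, heF, (ends e).2, h2v, Or.inl ?_, ?_⟩
    · rw [← h1v]
    · intro e' he' hne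
      constructor
      · intro hv
        have h5 : e' ∈ ({e} : Finset E) := by
          rw [← hAe]; exact Finset.mem_filter.2 ⟨he', hv⟩
        exact hne (Finset.mem_singleton.1 h5)
      · intro hv; exact hB' e' (Finset.mem_filter.2 ⟨he', hv⟩)

lemma deg_pos_incident {F : Finset E} {v : V} (hdeg : deg ends F v ≠ 0) :
    ∃ e ∈ F, (ends e).1 = v ∨ (ends e).2 = v := by
  classical
  unfold deg at hdeg
  rcases (by omega :
      (F.filter (fun e => (ends e).1 = v)).card ≠ 0 ∨
      (F.filter (fun e => (ends e).2 = v)).card ≠ 0) with hA | hB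
  · obtain ⟨e, he⟩ := Finset.card_ne_zero.1 hA
    obtain ⟨heF, hv⟩ := Finset.mem_filter.1 he
    exact ⟨e, heF, Or.inl hv⟩
  · obtain ⟨e, he⟩ := Finset.card_ne_zero.1 hB
    obtain ⟨heF, hv⟩ := Finset.mem_filter.1 he
    exact ⟨e, heF, Or.inr hv⟩

end CuckooStash

open CuckooStash

/-- If a multigraph `G` has excess at least `s+1`, then it contains a subgraph
(given by an edge subset `F'`) that is leafless (no vertex of degree 1), has excess
exactly `s+1`, and in which every connected component (of a non-isolated vertex) has
cyclomatic number at least 2. -/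
theorem stmt_9 {V E : Type*} [Fintype V] [DecidableEq V] [Fintype E] [DecidableEq E]
    (ends : E → V × V) (s : ℕ)
    (h : s + 1 ≤ excess ends Finset.univ) :
    ∃ F' : Finset E,
      (∀ v, deg ends F' v ≠ 1) ∧
      excess ends F' = s + 1 ∧
      (∀ v : V, deg ends F' v ≠ 0 →
        (compVerts ends F' v).card + 1 ≤ (compEdges ends F' v).card) := by
  classical
  obtain ⟨F, hFmem, hmin⟩ := Finset.exists_min_image
    (Finset.univ.filter (fun G : Finset E => s + 1 ≤ excess ends G)) Finset.card
    ⟨Finset.univ, Finset.mem_filter.2 ⟨Finset.mem_univ _, h⟩⟩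
  have hF : s + 1 ≤ excess ends F := (Finset.mem_filter.1 hFmem).2
  have hsmall : ∀ G : Finset E, s + 1 ≤ excess ends G → F.card ≤ G.card := fun G hG =>
    hmin G (Finset.mem_filter.2 ⟨Finset.mem_univ _, hG⟩)
  have hne : F.Nonempty := by
    rcases Finset.eq_empty_or_nonempty F with rfl | hne
    · rw [excess_empty] at hF; omega
    · exact hne
  have hErase : ∀ e ∈ F, excess ends (F.erase e) ≤ s := by
    intro e he
    by_contra hcon
    push_neg at hcon
    have h1 := hsmall _ hcon
    have h2 := Finset.card_erase_lt_of_mem he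
    omega
  have hEx : excess ends F = s + 1 := by
    obtain ⟨e, he⟩ := hne
    have h1 := excess_le_erase_add_one ends he
    have h2 := hErase e he
    omega
  refine ⟨F, ?_, hEx, ?_⟩
  · intro v hdeg
    obtain ⟨e, he, u, hu, hends, honly⟩ := deg_one_pendant ends hdeg
    have h1 := excess_le_erase_pendant ends he hu hends honly
    have h2 := hErase e he
    omega
  · intro v hdeg
    by_contra hcon
    push_neg at hcon
    have hgoodc : (compEdges ends F v).card ≤ (compVerts ends F v).card := by omega
    have h1 : excess ends F ≤ excess ends (F \ compEdges ends F v) :=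
      excess_le_sdiff_comp ends hgoodc
    have h2 : s + 1 ≤ excess ends (F \ compEdges ends F v) := by omega
    have h3 := hsmall _ h2
    -- but F \ compEdges is strictly smaller
    obtain ⟨e, he, hinc⟩ := deg_pos_incident ends hdeg
    have heC : e ∈ compEdges ends F v := by
      rw [mem_compEdges]
      refine ⟨he, ?_⟩
      rcases hinc with h4 | h4
      · rw [h4]; exact Relation.EqvGen.refl v
      · refine Relation.EqvGen.rel _ _ ⟨e, he, Or.inr ?_⟩
        rw [← h4]
    have h5 : (F \ compEdges ends F v).card < F.card := by
      have hCF : compEdges ends F v ⊆ F := fun e' he' => ((mem_compEdges ends).1 he').1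
      have := Finset.card_sdiff_of_subset hCF
      have hCpos : 0 < (compEdges ends F v).card := Finset.card_pos.2 ⟨e, heC⟩
      have := Finset.card_le_card hCF
      omega
    omega
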